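/- Let R be a commutative ring and let W = R[x₁,x₂,x₃,x₄]/(x₁²,x₂²,x₃²,x₄²). For each permutation σ of {1,2,3,4} let θ^σ ∈ W, with coefficient family (a_S^σ)_{S⊆{1,2,3,4}} defined by θ^σ = Σ_S a_S^σ ∏_{i∈S} x_i. Assume that for every permutation σ, every position k ∈ {1,2,3}, with i = σ(k), j = σ(k+1), and τ the permutation obtained from σ by interchanging the adjacent entries in positions k and k+1 of the word σ(1)σ(2)σ(3)σ(4), the difference θ^σ − θ^τ lies in the ideal of W generated by x_i·x_j. Then there exists a unique family of elements b_{S,ω} ∈ R, indexed by pairs consisting of a subset S ⊆ {1,2,3,4} and a linear order ω on S, such that for every permutation σ and every subset S one has a_S^σ = b_{S,ω_σ(S)}, where ω_σ(S) is the linear order induced on S by the order of appearance of its elements in the word σ(1)σ(2)σ(3)σ(4). -/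
import Mathlib


open MvPolynomial

/-- The ideal `(x₁², x₂², x₃², x₄²)` of `R[x₁,x₂,x₃,x₄]` (variables indexed by `Fin 4`):
the quotient by it is the Weil algebra `W`, the function algebra of `D⁴`. -/
noncomputable def sqIdeal4 (R : Type*) [CommRing R] : Ideal (MvPolynomial (Fin 4) R) :=
  Ideal.span (Set.range fun v : Fin 4 => X v ^ 2)

/-- A pair consisting of a subset `S ⊆ {1,2,3,4}` together with a linear order on `S`,
encoded as a duplicate-free list of elements of `Fin 4` (the set of entries of the list is
`S`, and the order of appearance in the list is the linear order). -/
abbrev OrderedSubset : Type :=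
  {l : List (Fin 4) // l.Nodup}

/-- The linear order `ω_σ(S)` induced on the subset `S` by the order of appearance of its
elements in the word `σ(1)σ(2)σ(3)σ(4)`, encoded as a duplicate-free list. -/
def inducedOrder (σ : Equiv.Perm (Fin 4)) (S : Finset (Fin 4)) : OrderedSubset :=
  ⟨(List.ofFn fun k : Fin 4 => σ k).filter (fun i => decide (i ∈ S)),
    (List.nodup_ofFn.mpr σ.injective).filter _⟩

/-! ### Combinatorial auxiliary lemmas (proved by `decide`) -/

def invCount (σ τ : Equiv.Perm (Fin 4)) : ℕ :=
  (Finset.univ.filter (fun p : Fin 4 × Fin 4 =>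
    p.1 < p.2 ∧ ((σ⁻¹ p.1 < σ⁻¹ p.2) ≠ (τ⁻¹ p.1 < τ⁻¹ p.2)))).card

def inverted (σ τ : Equiv.Perm (Fin 4)) (i j : Fin 4) : Prop :=
  (σ⁻¹ i < σ⁻¹ j) ≠ (τ⁻¹ i < τ⁻¹ j)

instance (σ τ : Equiv.Perm (Fin 4)) (i j : Fin 4) : Decidable (inverted σ τ i j) := by
  unfold inverted; infer_instance

lemma combC1 : ∀ σ τ : Equiv.Perm (Fin 4), invCount σ τ = 0 → σ = τ := by decide

lemma combC2 : ∀ σ τ : Equiv.Perm (Fin 4), σ ≠ τ →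
    ∃ k : Fin 3, inverted σ τ (σ k.castSucc) (σ k.succ) := by decide

lemma combC3 : ∀ (σ τ : Equiv.Perm (Fin 4)) (k : Fin 3),
    inverted σ τ (σ k.castSucc) (σ k.succ) →
    invCount (σ * Equiv.swap k.castSucc k.succ) τ < invCount σ τ := by decide

lemma combC4 : ∀ (σ : Equiv.Perm (Fin 4)) (S : Finset (Fin 4)) (k : Fin 3),
    ¬(σ k.castSucc ∈ S ∧ σ k.succ ∈ S) →
    inducedOrder (σ * Equiv.swap k.castSucc k.succ) S = inducedOrder σ S := by decide

lemma combC5 : ∀ (σ τ : Equiv.Perm (Fin 4)) (S : Finset (Fin 4)) (k : Fin 3),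
    inducedOrder σ S = inducedOrder τ S → σ k.castSucc ∈ S → σ k.succ ∈ S →
    ¬ inverted σ τ (σ k.castSucc) (σ k.succ) := by decide

lemma toFinset_inducedOrder : ∀ (σ : Equiv.Perm (Fin 4)) (S : Finset (Fin 4)),
    (inducedOrder σ S).1.toFinset = S := by decide

/-- From same induced orders and invariance under safe adjacent swaps, equality. -/
lemma a_eq_of_sameOrder {R : Type*} [CommRing R]
    (a : Equiv.Perm (Fin 4) → Finset (Fin 4) → R)
    (hstep : ∀ (σ : Equiv.Perm (Fin 4)) (k : Fin 3) (S : Finset (Fin 4)),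
      ¬(σ k.castSucc ∈ S ∧ σ k.succ ∈ S) →
      a σ S = a (σ * Equiv.swap k.castSucc k.succ) S) :
    ∀ (σ τ : Equiv.Perm (Fin 4)) (S : Finset (Fin 4)),
      inducedOrder σ S = inducedOrder τ S → a σ S = a τ S := by
  suffices H : ∀ (n : ℕ) (σ τ : Equiv.Perm (Fin 4)) (S : Finset (Fin 4)),
      invCount σ τ ≤ n → inducedOrder σ S = inducedOrder τ S → a σ S = a τ S by
    intro σ τ S h; exact H (invCount σ τ) σ τ S le_rfl h
  intro n
  induction n with
  | zero =>
    intro σ τ S h0 _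
    rw [combC1 σ τ (Nat.le_zero.mp h0)]
  | succ n ih =>
    intro σ τ S hle hord
    by_cases hst : σ = τ
    · rw [hst]
    · obtain ⟨k, hk⟩ := combC2 σ τ hst
      have hnot : ¬(σ k.castSucc ∈ S ∧ σ k.succ ∈ S) :=
        fun h => combC5 σ τ S k hord h.1 h.2 hk
      have h3 : invCount (σ * Equiv.swap k.castSucc k.succ) τ < invCount σ τ := combC3 σ τ k hk
      rw [hstep σ k S hnot]
      exact ih _ τ S (by omega) ((combC4 σ S k hnot).trans hord)

/-! ### A canonical permutation attached to an ordered subset -/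

def completeWord (l : List (Fin 4)) : List (Fin 4) :=
  l ++ (List.finRange 4).filter (fun i => decide (i ∉ l))

lemma completeWord_nodup {l : List (Fin 4)} (h : l.Nodup) : (completeWord l).Nodup := by
  refine List.Nodup.append h ((List.nodup_finRange 4).filter _) ?_
  intro x hx hx'
  have := List.of_mem_filter hx'
  simp only [decide_not, Bool.not_eq_true', decide_eq_false_iff_not] at this
  exact this hx

lemma mem_completeWord {l : List (Fin 4)} (i : Fin 4) : i ∈ completeWord l := by
  by_cases h : i ∈ l
  · exact List.mem_append_left _ h
  · refine List.mem_append_right _ (List.mem_filter.mpr ⟨List.mem_finRange i, by simpa using h⟩)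

lemma completeWord_length {l : List (Fin 4)} (h : l.Nodup) : (completeWord l).length = 4 := by
  have hn := completeWord_nodup h
  have : (completeWord l).toFinset = Finset.univ := by
    ext i; simp [mem_completeWord i]
  have hcard := List.toFinset_card_of_nodup hn
  rw [this] at hcard
  simpa using hcard.symm

noncomputable def permOf (os : OrderedSubset) : Equiv.Perm (Fin 4) :=
  Equiv.ofBijective
    (fun k => (completeWord os.1).get (Fin.cast (completeWord_length os.2).symm k))
    (by
      have hinj : Function.Injective
          (fun k : Fin 4 => (completeWord os.1).get
            (Fin.cast (completeWord_length os.2).symm k)) := by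
        intro x y hxy
        have := (List.nodup_iff_injective_get.mp (completeWord_nodup os.2)) hxy
        exact Fin.cast_injective _ this
      exact (Finite.injective_iff_bijective).mp hinj)

lemma word_permOf (os : OrderedSubset) :
    (List.ofFn fun k : Fin 4 => permOf os k) = completeWord os.1 := by
  apply List.ext_get
  · simp [completeWord_length os.2]
  · intro n h1 h2
    simp only [List.get_ofFn]
    rfl

lemma inducedOrder_permOf (os : OrderedSubset) :
    inducedOrder (permOf os) os.1.toFinset = os := by
  apply Subtype.ext
  show (List.ofFn fun k : Fin 4 => permOf os k).filter
      (fun i => decide (i ∈ os.1.toFinset)) = os.1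
  rw [word_permOf, completeWord, List.filter_append]
  have h1 : os.1.filter (fun i => decide (i ∈ os.1.toFinset)) = os.1 :=
    List.filter_eq_self.mpr (fun a ha => by simpa using ha)
  have h2 : ((List.finRange 4).filter (fun i => decide (i ∉ os.1))).filter
      (fun i => decide (i ∈ os.1.toFinset)) = [] := by
    rw [List.filter_eq_nil_iff]
    intro a ha
    have := List.of_mem_filter ha
    simpa using this
  rw [h1, h2, List.append_nil]

/-! ### Algebraic auxiliary lemmas -/

section Algebra

variable {R : Type*} [CommRing R]

/-- The exponent multiset of the squarefree monomial `∏_{i ∈ S} x_i`. -/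
noncomputable def msS (S : Finset (Fin 4)) : Fin 4 →₀ ℕ := ∑ i ∈ S, Finsupp.single i 1

lemma msS_apply (S : Finset (Fin 4)) (v : Fin 4) : msS S v = if v ∈ S then 1 else 0 := by
  classical
  simp [msS, Finset.sum_apply', Finsupp.single_apply, Finset.sum_ite_eq']

lemma mem_support_msS (S : Finset (Fin 4)) (v : Fin 4) : v ∈ (msS S).support ↔ v ∈ S := by
  rw [Finsupp.mem_support_iff, msS_apply]
  split <;> simp_all

lemma msS_injective : Function.Injective msS := by
  intro S T h
  ext v
  have : msS S v = msS T v := by rw [h]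
  rw [msS_apply, msS_apply] at this
  by_cases hS : v ∈ S <;> by_cases hT : v ∈ T <;> simp_all

lemma prod_X_eq (S : Finset (Fin 4)) :
    (∏ i ∈ S, (X i : MvPolynomial (Fin 4) R)) = monomial (msS S) 1 := by
  classical
  rw [← prod_X_pow_eq_monomial]
  have hsupp : (msS S).support = S := by ext v; exact mem_support_msS S v
  rw [hsupp]
  apply Finset.prod_congr rfl
  intro i hi
  rw [msS_apply, if_pos hi, pow_one]

lemma coeff_P (a : Finset (Fin 4) → R) (S : Finset (Fin 4)) :
    coeff (msS S) (∑ T : Finset (Fin 4), C (a T) * ∏ i ∈ T, X i) = a S := by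
  classical
  rw [MvPolynomial.coeff_sum]
  have : ∀ T : Finset (Fin 4),
      coeff (msS S) (C (a T) * ∏ i ∈ T, X i) = if msS T = msS S then a T else 0 := by
    intro T
    rw [prod_X_eq, C_mul_monomial, mul_one, coeff_monomial]
  rw [Finset.sum_congr rfl (fun T _ => this T)]
  rw [Finset.sum_eq_single S]
  · rw [if_pos rfl]
  · intro T _ hT
    rw [if_neg (fun h => hT (msS_injective h))]
  · intro h; exact absurd (Finset.mem_univ S) h

lemma coeff_mul_X_notmem (q : MvPolynomial (Fin 4) R) (v : Fin 4) (S : Finset (Fin 4))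
    (hv : v ∉ S) : coeff (msS S) (q * X v) = 0 := by
  classical
  rw [coeff_mul_X', if_neg]
  rw [mem_support_msS]; exact hv

lemma coeff_mul_sq (q : MvPolynomial (Fin 4) R) (v : Fin 4) (S : Finset (Fin 4)) :
    coeff (msS S) (q * X v ^ 2) = 0 := by
  classical
  rw [pow_two, ← mul_assoc, coeff_mul_X']
  split_ifs with h
  · rw [coeff_mul_X', if_neg]
    rw [Finsupp.mem_support_iff]
    simp only [Finsupp.tsub_apply, Finsupp.single_apply, if_pos rfl]
    rw [msS_apply]
    rw [mem_support_msS] at h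
    rw [if_pos h]
    simp
  · rfl

lemma coeff_sqIdeal (S : Finset (Fin 4)) {f : MvPolynomial (Fin 4) R}
    (hf : f ∈ sqIdeal4 R) : coeff (msS S) f = 0 := by
  have key : ∀ q : MvPolynomial (Fin 4) R, coeff (msS S) (q * f) = 0 := by
    refine Submodule.span_induction (p := fun x _ => ∀ q, coeff (msS S) (q * x) = 0)
      ?_ ?_ ?_ ?_ hf
    · rintro x ⟨v, rfl⟩ q
      exact coeff_mul_sq q v S
    · intro q; simp
    · intro x y _ _ hx hy q
      rw [mul_add, MvPolynomial.coeff_add, hx, hy, add_zero]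
    · intro c x _ hx q
      rw [smul_eq_mul, ← mul_assoc, hx]
  simpa using key 1

lemma coeff_mul_XX (q : MvPolynomial (Fin 4) R) (i j : Fin 4) (S : Finset (Fin 4))
    (h : ¬(i ∈ S ∧ j ∈ S)) : coeff (msS S) (X i * X j * q) = 0 := by
  by_cases hi : i ∈ S
  · have hj : j ∉ S := fun hj => h ⟨hi, hj⟩
    have : X i * X j * q = (X i * q) * X j := by ring
    rw [this]
    exact coeff_mul_X_notmem _ j S hj
  · have : X i * X j * q = (X j * q) * X i := by ring
    rw [this]
    exact coeff_mul_X_notmem _ i S hi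

end Algebra


/-- Let `W = R[x₁,x₂,x₃,x₄]/(x₁²,x₂²,x₃²,x₄²)` and, for each permutation `σ` of `{1,2,3,4}`,
let `θ^σ ∈ W` have coefficient family `a_S^σ`, i.e. `θ^σ = Σ_S a_S^σ ∏_{i∈S} x_i`.  Assume
that for every `σ` and every position `k`, with `i = σ k` and `j = σ (k+1)` and `τ` the
permutation obtained from `σ` by interchanging the adjacent entries in positions `k`, `k+1`
of the word of `σ`, the difference `θ^σ - θ^τ` lies in the ideal generated by `x_i·x_j`.
Then there is a unique family `b`, indexed by pairs of a subset `S ⊆ {1,2,3,4}` and a linear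
order `ω` on `S`, with `a_S^σ = b (S, ω_σ(S))` for all `σ` and `S`, where `ω_σ(S)` is the
order induced on `S` by the word of `σ`. -/
theorem factor_through_ordered_subsets {R : Type*} [CommRing R]
    (θ : Equiv.Perm (Fin 4) → MvPolynomial (Fin 4) R ⧸ sqIdeal4 R)
    (a : Equiv.Perm (Fin 4) → Finset (Fin 4) → R)
    (hθ : ∀ σ : Equiv.Perm (Fin 4), θ σ = Ideal.Quotient.mk (sqIdeal4 R)
      (∑ S : Finset (Fin 4), C (a σ S) * ∏ i ∈ S, X i))
    (hcomp : ∀ (σ : Equiv.Perm (Fin 4)) (k : Fin 3),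
      θ σ - θ (σ * Equiv.swap k.castSucc k.succ) ∈
        Ideal.span {Ideal.Quotient.mk (sqIdeal4 R) (X (σ k.castSucc) * X (σ k.succ))}) :
    ∃! b : OrderedSubset → R,
      ∀ (σ : Equiv.Perm (Fin 4)) (S : Finset (Fin 4)), a σ S = b (inducedOrder σ S) := by
  classical
  -- Step 1: invariance of `a` under safe adjacent swaps
  have hstep : ∀ (σ : Equiv.Perm (Fin 4)) (k : Fin 3) (S : Finset (Fin 4)),
      ¬(σ k.castSucc ∈ S ∧ σ k.succ ∈ S) →
      a σ S = a (σ * Equiv.swap k.castSucc k.succ) S := by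
    intro σ k S hS
    set τ := σ * Equiv.swap k.castSucc k.succ with hτ
    set i := σ k.castSucc
    set j := σ k.succ
    have hmem := hcomp σ k
    rw [hθ σ, hθ τ, ← map_sub] at hmem
    rw [Ideal.mem_span_singleton] at hmem
    obtain ⟨c, hc⟩ := hmem
    obtain ⟨q, rfl⟩ := Ideal.Quotient.mk_surjective c
    set Δ := (∑ S : Finset (Fin 4), C (a σ S) * ∏ i ∈ S, X i) -
      (∑ S : Finset (Fin 4), C (a τ S) * ∏ i ∈ S, X i) with hΔ
    have hmem2 : Δ - X i * X j * q ∈ sqIdeal4 R := by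
      rw [← Ideal.Quotient.eq_zero_iff_mem, map_sub, map_mul, map_mul, hc, map_mul]
      ring
    have h0 : coeff (msS S) (Δ - X i * X j * q) = 0 := coeff_sqIdeal S hmem2
    rw [MvPolynomial.coeff_sub, coeff_mul_XX q i j S hS, sub_zero, hΔ,
      MvPolynomial.coeff_sub, coeff_P, coeff_P] at h0
    exact sub_eq_zero.mp h0
  have hsame := a_eq_of_sameOrder a hstep
  -- Step 2: define `b`
  refine ⟨fun os => a (permOf os) os.1.toFinset, ?_, ?_⟩
  · intro σ S
    set io := inducedOrder σ S with hio
    have h1 : io.1.toFinset = S := toFinset_inducedOrder σ S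
    have h2 : inducedOrder (permOf io) S = io := h1 ▸ inducedOrder_permOf io
    show a σ S = a (permOf io) io.1.toFinset
    rw [h1]
    exact hsame σ (permOf io) S h2.symm
  · intro b' hb'
    funext os
    exact ((hb' (permOf os) os.1.toFinset).trans
      (congrArg b' (inducedOrder_permOf os))).symm
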